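/- Let R be an exchange ring, n ≥ 2, I a twosided ideal of R and x in I. Let u be a column in R^n and v a unimodular row in ^nR (i.e., v w = 1 for some column w) such that v u = 0. Then e + u x v lies in E_n(R,I). -/

import Mathlib

open Matrix

/-- An exchange ring: for every `x` there is an idempotent `e ∈ xR` with `1 - e ∈ (1-x)R`. -/
def IsExchangeRing (R : Type*) [Ring R] : Prop :=
  ∀ x : R, ∃ e r s : R, e * e = e ∧ e = x * r ∧ 1 - e = (1 - x) * s

/-- The elementary transvection `t_{ij}(x) = e + x e^{ij}` as an element of `GL n R`. -/
def transv {n : ℕ} {R : Type*} [Ring R] (i j : Fin n) (hij : i ≠ j) (x : R) :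
    (Matrix (Fin n) (Fin n) R)ˣ :=
  ⟨1 + Matrix.single i j x, 1 + Matrix.single i j (-x),
    by
      have h0 : Matrix.single i j (x) * Matrix.single i j (-x) = 0 :=
        Matrix.single_mul_single_of_ne (h := hij.symm) ..
      have h1 : Matrix.single i j (-x) * Matrix.single i j (x) = 0 :=
        Matrix.single_mul_single_of_ne (h := hij.symm) ..
      simp [mul_add, add_mul, h0, h1, ← Matrix.single_add, add_assoc],
    by
      have h0 : Matrix.single i j (x) * Matrix.single i j (-x) = 0 :=
        Matrix.single_mul_single_of_ne (h := hij.symm) ..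
      have h1 : Matrix.single i j (-x) * Matrix.single i j (x) = 0 :=
        Matrix.single_mul_single_of_ne (h := hij.symm) ..
      simp [mul_add, add_mul, h0, h1, ← Matrix.single_add, add_assoc]⟩

/-- The elementary subgroup `E_n(R)` of `GL_n(R)`. -/
def elemGroup (n : ℕ) (R : Type*) [Ring R] : Subgroup ((Matrix (Fin n) (Fin n) R)ˣ) :=
  Subgroup.closure { g | ∃ i j : Fin n, ∃ hij : i ≠ j, ∃ x : R, g = transv i j hij x }

/-- The preelementary subgroup `E_n(I)` of level a two-sided ideal `I`. -/
def preElem (n : ℕ) (R : Type*) [Ring R] (I : TwoSidedIdeal R) : Subgroup ((Matrix (Fin n) (Fin n) R)ˣ) :=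
  Subgroup.closure { g | ∃ i j : Fin n, ∃ hij : i ≠ j, ∃ x ∈ I, g = transv i j hij x }

/-- The relative elementary subgroup `E_n(R,I)`: the normal closure of `E_n(I)` in `E_n(R)`. -/
def relElem (n : ℕ) (R : Type*) [Ring R] (I : TwoSidedIdeal R) : Subgroup ((Matrix (Fin n) (Fin n) R)ˣ) :=
  Subgroup.closure { g | ∃ τ ∈ elemGroup n R, ∃ ε ∈ preElem n R I, g = τ⁻¹ * ε * τ }

/-- The full congruence subgroup `C_n(R,I)`: preimage of the center of `GL_n(R/I)`. -/
def congrSubgroup (n : ℕ) (R : Type*) [Ring R] (I : TwoSidedIdeal R) :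
    Subgroup ((Matrix (Fin n) (Fin n) R)ˣ) :=
  Subgroup.comap
    (Units.map ((RingHom.mapMatrix (RingCon.mk' I.ringCon)).toMonoidHom :
      Matrix (Fin n) (Fin n) R →* Matrix (Fin n) (Fin n) I.ringCon.Quotient))
    (Subgroup.center ((Matrix (Fin n) (Fin n) I.ringCon.Quotient)ˣ))

/-- `x` is a product of `m` `H`-conjugates of `a` and `a⁻¹`. -/
def IsProdConj {G : Type*} [Group G] (H : Subgroup G) (a x : G) (m : ℕ) : Prop :=
  ∃ f : Fin m → G, (∀ k, ∃ h ∈ H, f k = h⁻¹ * a * h ∨ f k = h⁻¹ * a⁻¹ * h) ∧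
    x = (List.ofFn f).prod

section Lemmas
variable {n : ℕ} {R : Type*} [Ring R] {I : TwoSidedIdeal R}

lemma transv_val (i j : Fin n) (hij : i ≠ j) (x : R) :
    (transv i j hij x).val = 1 + Matrix.single i j x := rfl

lemma transv_inv (i j : Fin n) (hij : i ≠ j) (x : R) :
    (transv i j hij x)⁻¹ = transv i j hij (-x) := by
  apply Units.ext; rfl

lemma transv_mem_elem (i j : Fin n) (hij : i ≠ j) (x : R) :
    transv i j hij x ∈ elemGroup n R :=
  Subgroup.subset_closure ⟨i, j, hij, x, rfl⟩

lemma transv_mem_pre (i j : Fin n) (hij : i ≠ j) {x : R} (hx : x ∈ I) :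
    transv i j hij x ∈ preElem n R I :=
  Subgroup.subset_closure ⟨i, j, hij, x, hx, rfl⟩

lemma preElem_le_relElem : preElem n R I ≤ relElem n R I := fun ε hε =>
  Subgroup.subset_closure ⟨1, one_mem _, ε, hε, by group⟩

lemma relElem_conj {τ g : (Matrix (Fin n) (Fin n) R)ˣ} (hτ : τ ∈ elemGroup n R)
    (hg : g ∈ relElem n R I) : τ * g * τ⁻¹ ∈ relElem n R I := by
  induction hg using Subgroup.closure_induction with
  | mem x hx =>
    obtain ⟨σ, hσ, ε, hε, rfl⟩ := hx
    have : τ * (σ⁻¹ * ε * σ) * τ⁻¹ = (σ * τ⁻¹)⁻¹ * ε * (σ * τ⁻¹) := by group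
    rw [this]
    exact Subgroup.subset_closure ⟨σ * τ⁻¹, mul_mem hσ (inv_mem hτ), ε, hε, rfl⟩
  | one => simpa using one_mem (relElem n R I)
  | mul a b _ _ ha hb =>
    have : τ * (a * b) * τ⁻¹ = (τ * a * τ⁻¹) * (τ * b * τ⁻¹) := by group
    rw [this]; exact mul_mem ha hb
  | inv a _ ha =>
    have : τ * a⁻¹ * τ⁻¹ = (τ * a * τ⁻¹)⁻¹ := by group
    rw [this]; exact inv_mem ha

lemma vecMul_std (v : Fin n → R) (i j : Fin n) (a : R) (k : Fin n) :
    vecMul v (Matrix.single i j a) k = if k = j then v i * a else 0 := by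
  simp only [Matrix.vecMul, dotProduct, Matrix.single, Matrix.of_apply,
    ite_and, mul_ite, mul_zero]
  rw [Finset.sum_ite_eq (Finset.univ) i (fun i' => if j = k then v i' * a else 0)]
  simp [eq_comm]

lemma sum_std_apply (s : Finset (Fin n)) (j : Fin n) (γ : Fin n → R) (a b : Fin n) :
    (∑ k ∈ s, Matrix.single j k (γ k)) a b
      = if a = j ∧ b ∈ s then γ b else 0 := by
  rw [Matrix.sum_apply]
  simp only [Matrix.single, Matrix.of_apply]
  by_cases ha : a = j
  · subst ha
    simp only [eq_self_iff_true, true_and, ite_and]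
    rw [Finset.sum_ite_eq' s b (fun k => γ k)]
  · simp [Ne.symm ha, ha]

lemma sum_std_apply' (s : Finset (Fin n)) (j : Fin n) (γ : Fin n → R) (a b : Fin n) :
    (∑ k ∈ s, Matrix.single k j (γ k)) a b
      = if b = j ∧ a ∈ s then γ a else 0 := by
  rw [Matrix.sum_apply]
  simp only [Matrix.single, Matrix.of_apply]
  by_cases hb : b = j
  · subst hb
    simp only [eq_self_iff_true, and_true, true_and, ite_and]
    have : ∀ k ∈ s, (if k = a then if b = b then γ k else 0 else 0) = if k = a then γ k else 0 := by
      intro k _; simp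
    rw [Finset.sum_ite_eq' s a (fun k => γ k)]
  · simp [Ne.symm hb, hb]

/-- Product of transvections in a fixed row `j`. -/
lemma rowProd (j : Fin n) (γ : Fin n → R) (s : Finset (Fin n)) (hj : j ∉ s) :
    ∃ P : (Matrix (Fin n) (Fin n) R)ˣ,
      P.val = 1 + ∑ k ∈ s, Matrix.single j k (γ k) ∧ P ∈ elemGroup n R ∧
      ((∀ k ∈ s, γ k ∈ I) → P ∈ preElem n R I) := by
  induction s using Finset.induction_on with
  | empty => exact ⟨1, by simp, one_mem _, fun _ => one_mem _⟩
  | @insert a s ha ih =>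
    obtain ⟨P, hPval, hPe, hPp⟩ := ih (fun h => hj (Finset.mem_insert_of_mem h))
    have haj : j ≠ a := fun h => hj (h ▸ Finset.mem_insert_self a s)
    refine ⟨transv j a haj (γ a) * P, ?_, mul_mem (transv_mem_elem _ _ _ _) hPe,
      fun hI => mul_mem (transv_mem_pre _ _ _ (hI a (Finset.mem_insert_self a s)))
        (hPp fun k hk => hI k (Finset.mem_insert_of_mem hk))⟩
    have hzero : Matrix.single j a (γ a) * (∑ k ∈ s, Matrix.single j k (γ k)) = 0 := by
      rw [Finset.mul_sum]
      refine Finset.sum_eq_zero fun k hk => ?_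
      exact Matrix.single_mul_single_of_ne (h := haj.symm) ..
    rw [Units.val_mul, transv_val, hPval, Finset.sum_insert ha]
    rw [add_mul, one_mul, mul_add, mul_one, hzero, add_zero]
    abel

/-- Product of transvections in a fixed column `j`. -/
lemma colProd (j : Fin n) (γ : Fin n → R) (s : Finset (Fin n)) (hj : j ∉ s) :
    ∃ P : (Matrix (Fin n) (Fin n) R)ˣ,
      P.val = 1 + ∑ k ∈ s, Matrix.single k j (γ k) ∧ P ∈ elemGroup n R := by
  induction s using Finset.induction_on with
  | empty => exact ⟨1, by simp, one_mem _⟩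
  | @insert a s ha ih =>
    obtain ⟨P, hPval, hPe⟩ := ih (fun h => hj (Finset.mem_insert_of_mem h))
    have haj : a ≠ j := fun h => hj (h ▸ Finset.mem_insert_self a s)
    refine ⟨transv a j haj (γ a) * P, ?_, mul_mem (transv_mem_elem _ _ _ _) hPe⟩
    have hzero : Matrix.single a j (γ a) * (∑ k ∈ s, Matrix.single k j (γ k)) = 0 := by
      rw [Finset.mul_sum]
      refine Finset.sum_eq_zero fun k hk => ?_
      have : j ≠ k := fun h => hj (h ▸ Finset.mem_insert_of_mem hk)
      exact Matrix.single_mul_single_of_ne (h := this) ..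
    rw [Units.val_mul, transv_val, hPval, Finset.sum_insert ha]
    rw [add_mul, one_mul, mul_add, mul_one, hzero, add_zero]
    abel

/-- Corner exchange: exchange property inside a corner `gRg`. -/
lemma corner_exchange (hR : IsExchangeRing R) {g x : R} (hg : g * g = g)
    (hgx : g * x = x) (hxg : x * g = x) :
    ∃ e c d : R, e * e = e ∧ e = x * c ∧ g - e = (g - x) * d ∧ g * e = e ∧ e * g = e := by
  obtain ⟨e', r, s, he', her, hes⟩ := hR x
  have hge' : g * e' = e' := by rw [her, ← mul_assoc, hgx]
  refine ⟨e' * g, r * g, s * g, ?_, by rw [her, mul_assoc], ?_, ?_, ?_⟩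
  · calc e' * g * (e' * g) = e' * (g * e') * g := by noncomm_ring
    _ = e' * g := by rw [hge', he']
  · have h1 : g - e' = (g - x) * s := by
      have h2 := congrArg (fun t => g * t) hes
      simp only [mul_sub, mul_one, hge'] at h2
      rw [← mul_assoc, mul_sub, mul_one, hgx] at h2
      exact h2
    calc g - e' * g = (g - e') * g := by rw [sub_mul, hg]
    _ = (g - x) * (s * g) := by rw [h1, mul_assoc]
  · rw [← mul_assoc, hge']
  · rw [mul_assoc, hg]

lemma vecMul_one_add_row (v : Fin n → R) (j₀ : Fin n) (y : Fin n → R) (t : Finset (Fin n))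
    (k : Fin n) :
    vecMul v (1 + ∑ j ∈ t, Matrix.single j₀ j (y j)) k
      = v k + (if k ∈ t then v j₀ * y k else 0) := by
  rw [Matrix.vecMul_add, Matrix.vecMul_one]
  simp only [Pi.add_apply]
  congr 1
  simp only [Matrix.vecMul, dotProduct]
  have : ∀ i, (∑ j ∈ t, Matrix.single j₀ j (y j)) i k = if i = j₀ ∧ k ∈ t then y k else 0 :=
    fun i => sum_std_apply t j₀ y i k
  simp only [this, mul_ite, mul_zero, ite_and]
  by_cases hk : k ∈ t
  · simp only [hk, if_true]
    rw [Finset.sum_ite_eq' Finset.univ j₀ (fun i => v i * y k)]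
    simp
  · simp [hk]

lemma vecMul_one_add_col (v : Fin n → R) (j₀ : Fin n) (z : Fin n → R) (t : Finset (Fin n))
    (k : Fin n) :
    vecMul v (1 + ∑ j ∈ t, Matrix.single j j₀ (z j)) k
      = v k + (if k = j₀ then ∑ j ∈ t, v j * z j else 0) := by
  rw [Matrix.vecMul_add, Matrix.vecMul_one]
  simp only [Pi.add_apply]
  congr 1
  simp only [Matrix.vecMul, dotProduct]
  have : ∀ i, (∑ j ∈ t, Matrix.single j j₀ (z j)) i k = if k = j₀ ∧ i ∈ t then z i else 0 :=
    fun i => sum_std_apply' t j₀ z i k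
  simp only [this, mul_ite, mul_zero, ite_and]
  by_cases hk : k = j₀
  · simp only [hk, if_true]
    rw [← Finset.sum_filter]
    rw [Finset.filter_mem_eq_inter, Finset.univ_inter]
  · simp [hk]

lemma normalizeRow (hR : IsExchangeRing R) (s : Finset (Fin n)) :
    ∀ (g : R), g * g = g → ∀ (v w : Fin n → R), (∀ j ∈ s, g * v j = v j) →
    (∑ j ∈ s, v j * w j) = g →
    ∃ τ ∈ elemGroup n R, ∃ h w' : Fin n → R,
      (∀ k, k ∉ s → vecMul v τ.val k = v k) ∧
      (∀ j ∈ s, h j * h j = h j ∧ g * h j = h j ∧ h j * g = h j ∧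
        h j * vecMul v τ.val j = vecMul v τ.val j ∧ vecMul v τ.val j * w' j = h j) ∧
      (∀ i ∈ s, ∀ j ∈ s, i ≠ j → h i * h j = 0) ∧ (∑ j ∈ s, h j) = g := by
  induction s using Finset.induction_on with
  | empty =>
    intro g hg v w _ hw
    refine ⟨1, one_mem _, fun _ => 0, fun _ => 0, ?_, ?_, ?_, ?_⟩
    · intro k _; rw [Units.val_one, Matrix.vecMul_one]
    · intro j hj; exact absurd hj (Finset.notMem_empty j)
    · intro i hi; exact absurd hi (Finset.notMem_empty i)
    · simpa using hw
  | @insert j₀ t hj₀ ih =>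
    intro g hg v w hv hw
    -- improved witness
    set wg : Fin n → R := fun j => w j * g with hwg
    have hwgsum : ∑ j ∈ insert j₀ t, v j * wg j = g := by
      have : ∀ j ∈ insert j₀ t, v j * wg j = v j * w j * g := fun j _ => by
        rw [hwg, ← mul_assoc]
      rw [Finset.sum_congr rfl this, ← Finset.sum_mul, hw, hg]
    set x : R := v j₀ * wg j₀ with hxdef
    have hj₀mem : j₀ ∈ insert j₀ t := Finset.mem_insert_self j₀ t
    have hgx : g * x = x := by rw [hxdef, ← mul_assoc, hv j₀ hj₀mem]
    have hxg : x * g = x := by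
      rw [hxdef, hwg, mul_assoc, mul_assoc, hg]
    obtain ⟨e, c₀, d₀, he, hec, hgd, hge, heg⟩ := corner_exchange hR hg hgx hxg
    set cc : R := wg j₀ * c₀ with hccdef
    have hvcc : v j₀ * cc = e := by rw [hccdef, ← mul_assoc, ← hxdef, ← hec]
    have hrest : ∑ j ∈ t, v j * wg j = g - x := by
      rw [Finset.sum_insert hj₀] at hwgsum
      rw [← hwgsum, hxdef, add_sub_cancel_left]
    set d : Fin n → R := fun j => wg j * d₀ with hddef
    have hd : ∑ j ∈ t, v j * d j = g - e := by
      have : ∀ j ∈ t, v j * d j = v j * wg j * d₀ := fun j _ => by rw [hddef, ← mul_assoc]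
      rw [Finset.sum_congr rfl this, ← Finset.sum_mul, hrest, ← hgd]
    -- first batch of transvections
    obtain ⟨τ₁, hτ₁val, hτ₁e, -⟩ :=
      rowProd (I := ⊥) j₀ (fun j => -(cc * v j)) t hj₀
    set v₁ : Fin n → R := vecMul v τ₁.val with hv₁def
    have hv₁ : ∀ k, v₁ k = if k ∈ t then v k - e * v k else v k := by
      intro k
      rw [hv₁def, hτ₁val, vecMul_one_add_row]
      by_cases hk : k ∈ t
      · simp only [hk, if_true]
        rw [mul_neg, ← mul_assoc, hvcc, ← sub_eq_add_neg]
      · simp [hk]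
    -- second batch
    obtain ⟨τ₂, hτ₂val, hτ₂e⟩ :=
      colProd j₀ (fun j => -(d j * v j₀)) t hj₀
    set v₂ : Fin n → R := vecMul v₁ τ₂.val with hv₂def
    have hv₂ne : ∀ k, k ≠ j₀ → v₂ k = v₁ k := by
      intro k hk
      rw [hv₂def, hτ₂val, vecMul_one_add_col]
      simp [hk]
    have hv₁sum : ∑ j ∈ t, v₁ j * d j = g - e := by
      have h1 : ∀ j ∈ t, v₁ j * d j = v j * d j - e * (v j * d j) := by
        intro j hj
        rw [hv₁ j, if_pos hj, sub_mul, mul_assoc]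
      rw [Finset.sum_congr rfl h1, Finset.sum_sub_distrib, ← Finset.mul_sum, hd,
        mul_sub, heg, he, sub_self, sub_zero]
    have hv₂j₀ : v₂ j₀ = e * v j₀ := by
      rw [hv₂def, hτ₂val, vecMul_one_add_col, if_pos rfl]
      have h1 : ∀ j ∈ t, v₁ j * -(d j * v j₀) = -(v₁ j * d j) * v j₀ := by
        intro j _
        rw [mul_neg, ← mul_assoc, neg_mul]
      rw [Finset.sum_congr rfl h1, ← Finset.sum_mul, Finset.sum_neg_distrib, hv₁sum]
      have hgv : g * v j₀ = v j₀ := hv j₀ hj₀mem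
      rw [hv₁ j₀, if_neg hj₀, neg_sub, sub_mul, hgv]
      abel
    -- recursive call
    set g' : R := g - e with hg'def
    have hg' : g' * g' = g' := by
      rw [hg'def, sub_mul, mul_sub, mul_sub, hg, hge, heg, he]
      abel
    have hgg' : g * g' = g' := by rw [hg'def, mul_sub, hg, hge]
    have hg'g : g' * g = g' := by rw [hg'def, sub_mul, hg, heg]
    have heg' : e * g' = 0 := by rw [hg'def, mul_sub, heg, he, sub_self]
    have hg'e : g' * e = 0 := by rw [hg'def, sub_mul, hge, he, sub_self]
    have hvrec : ∀ j ∈ t, g' * v₂ j = v₂ j := by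
      intro j hj
      have hjne : j ≠ j₀ := fun hh => hj₀ (hh ▸ hj)
      have hgv : g * v j = v j := hv j (Finset.mem_insert_of_mem hj)
      rw [hv₂ne j hjne, hv₁ j, if_pos hj, hg'def, sub_mul, mul_sub, mul_sub, hgv,
        ← mul_assoc, ← mul_assoc, hge, he]
      abel
    have hwrec : ∑ j ∈ t, v₂ j * d j = g' := by
      have h1 : ∀ j ∈ t, v₂ j * d j = v₁ j * d j := by
        intro j hj
        have hjne : j ≠ j₀ := fun hh => hj₀ (hh ▸ hj)
        rw [hv₂ne j hjne]
      rw [Finset.sum_congr rfl h1, hv₁sum, hg'def]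
    obtain ⟨τ₃, hτ₃e, h', w'', hout, hmain, horth, hsum⟩ := ih g' hg' v₂ d hvrec hwrec
    -- assemble
    have hvcomp : vecMul v (τ₁ * τ₂ * τ₃).val = vecMul v₂ τ₃.val := by
      rw [Units.val_mul, Units.val_mul, ← Matrix.vecMul_vecMul, ← Matrix.vecMul_vecMul,
        ← hv₁def, ← hv₂def]
    refine ⟨τ₁ * τ₂ * τ₃, mul_mem (mul_mem hτ₁e hτ₂e) hτ₃e,
      (fun k => if k = j₀ then e else h' k), (fun k => if k = j₀ then cc else w'' k),
      ?_, ?_, ?_, ?_⟩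
    · intro k hk
      have hkj₀ : k ≠ j₀ := fun hh => hk (hh ▸ Finset.mem_insert_self j₀ t)
      have hkt : k ∉ t := fun hh => hk (Finset.mem_insert_of_mem hh)
      rw [hvcomp, hout k hkt, hv₂ne k hkj₀, hv₁ k, if_neg hkt]
    · intro j hj
      rcases Finset.mem_insert.mp hj with hj' | hj'
      · subst hj'
        have hv₃j₀ : vecMul v (τ₁ * τ₂ * τ₃).val j = e * v j := by
          rw [hvcomp, hout j hj₀, hv₂j₀]
        simp only [if_pos rfl, if_true, hv₃j₀]
        refine ⟨he, hge, heg, ?_, ?_⟩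
        · rw [← mul_assoc, he]
        · rw [mul_assoc, hvcc, he]
      · have hjne : j ≠ j₀ := fun hh => hj₀ (hh ▸ hj')
        obtain ⟨h1, h2, h3, h4, h5⟩ := hmain j hj'
        simp only [if_neg hjne]
        rw [hvcomp]
        refine ⟨h1, ?_, ?_, h4, h5⟩
        · conv_lhs => rw [← h2]
          rw [← mul_assoc, hgg', h2]
        · conv_lhs => rw [← h3]
          rw [mul_assoc, hg'g, h3]
    · intro i hi j hj hij
      rcases Finset.mem_insert.mp hi with hi' | hi' <;>
        rcases Finset.mem_insert.mp hj with hj' | hj'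
      · exact absurd (hi'.trans hj'.symm) hij
      · have hjne : j ≠ j₀ := fun hh => hj₀ (hh ▸ hj')
        obtain ⟨h1, h2, h3, h4, h5⟩ := hmain j hj'
        simp only [if_pos hi', if_neg hjne]
        rw [← h2, ← mul_assoc, heg', zero_mul]
      · have hine : i ≠ j₀ := fun hh => hj₀ (hh ▸ hi')
        obtain ⟨h1, h2, h3, h4, h5⟩ := hmain i hi'
        simp only [if_neg hine, if_pos hj']
        rw [← h3, mul_assoc, hg'e, mul_zero]
      · have hine : i ≠ j₀ := fun hh => hj₀ (hh ▸ hi')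
        have hjne : j ≠ j₀ := fun hh => hj₀ (hh ▸ hj')
        simp only [if_neg hine, if_neg hjne]
        exact horth i hi' j hj' hij
    · rw [Finset.sum_insert hj₀]
      have : ∀ j ∈ t, (if j = j₀ then e else h' j) = h' j := by
        intro j hj
        have hjne : j ≠ j₀ := fun hh => hj₀ (hh ▸ hj)
        rw [if_neg hjne]
      rw [if_pos rfl, Finset.sum_congr rfl this, hsum, hg'def]
      abel

lemma diag_unit (j k₀ : Fin n) (hjk : j ≠ k₀) (α f : R) (hαf : α * f = α)
    (hfα : f * α = 0) (hαα : α * α = 0) :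
    ((transv j k₀ hjk α) * (transv k₀ j hjk.symm f) * (transv j k₀ hjk (-α)) *
      (transv k₀ j hjk.symm (-f))).val = 1 + Matrix.single j j α := by
  have hAB : Matrix.single j k₀ α * Matrix.single k₀ j f = Matrix.single j j α := by
    rw [Matrix.single_mul_single_same, hαf]
  have hAC : Matrix.single j k₀ α * Matrix.single j k₀ (-α) = 0 :=
    Matrix.single_mul_single_of_ne (h := hjk.symm) ..
  have hBC : Matrix.single k₀ j f * Matrix.single j k₀ (-α) = 0 := by
    rw [Matrix.single_mul_single_same, mul_neg, hfα, neg_zero, Matrix.single_zero]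
  have hDC : Matrix.single j j α * Matrix.single j k₀ (-α) = 0 := by
    rw [Matrix.single_mul_single_same, mul_neg, hαα, neg_zero, Matrix.single_zero]
  have hBE : Matrix.single k₀ j f * Matrix.single k₀ j (-f) = 0 :=
    Matrix.single_mul_single_of_ne (h := hjk) ..
  have hDE : Matrix.single j j α * Matrix.single k₀ j (-f) = 0 :=
    Matrix.single_mul_single_of_ne (h := hjk) ..
  have s1 : (transv j k₀ hjk α).val * (transv k₀ j hjk.symm f).val
      = 1 + Matrix.single j k₀ α + Matrix.single k₀ j f + Matrix.single j j α := by
    rw [transv_val, transv_val, mul_add, mul_one, add_mul, one_mul, hAB]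
    abel
  have s2 : (1 + Matrix.single j k₀ α + Matrix.single k₀ j f + Matrix.single j j α) *
      (transv j k₀ hjk (-α)).val
      = 1 + Matrix.single k₀ j f + Matrix.single j j α := by
    rw [transv_val, mul_add, mul_one]
    rw [add_mul, add_mul, add_mul, one_mul, hAC, hBC, hDC]
    rw [add_zero, add_zero, add_zero]
    have : Matrix.single j k₀ α + Matrix.single j k₀ (-α) = 0 := by
      rw [← Matrix.single_add, add_neg_cancel, Matrix.single_zero]
    calc 1 + Matrix.single j k₀ α + Matrix.single k₀ j f + Matrix.single j j α +
          Matrix.single j k₀ (-α)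
        = 1 + Matrix.single k₀ j f + Matrix.single j j α +
          (Matrix.single j k₀ α + Matrix.single j k₀ (-α)) := by abel
      _ = 1 + Matrix.single k₀ j f + Matrix.single j j α := by rw [this, add_zero]
  have s3 : (1 + Matrix.single k₀ j f + Matrix.single j j α) * (transv k₀ j hjk.symm (-f)).val
      = 1 + Matrix.single j j α := by
    rw [transv_val, mul_add, mul_one]
    rw [add_mul, add_mul, one_mul, hBE, hDE]
    rw [add_zero, add_zero]
    have : Matrix.single k₀ j f + Matrix.single k₀ j (-f) = 0 := by
      rw [← Matrix.single_add, add_neg_cancel, Matrix.single_zero]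
    calc 1 + Matrix.single k₀ j f + Matrix.single j j α + Matrix.single k₀ j (-f)
        = 1 + Matrix.single j j α + (Matrix.single k₀ j f + Matrix.single k₀ j (-f)) := by
          abel
      _ = 1 + Matrix.single j j α := by rw [this, add_zero]
  rw [Units.val_mul, Units.val_mul, Units.val_mul, s1, s2, s3]

lemma piece_mem (hn : 2 ≤ n) (j : Fin n) {ζ : R} (hζ : ζ ∈ I) (v : Fin n → R) (f : R)
    (hvf : v j * f = v j) (hff : f * f = f) :
    ∃ G : (Matrix (Fin n) (Fin n) R)ˣ, G ∈ relElem n R I ∧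
      G.val = 1 + vecMulVec (fun a => if a = j then (1 - f) * ζ else 0) v := by
  obtain ⟨k₀, hk₀⟩ := Fintype.exists_ne_of_one_lt_card (by simp; omega) j
  have hjk : j ≠ k₀ := hk₀.symm
  set β : Fin n → R := fun k => (1 - f) * ζ * v k with hβ
  set α : R := β j with hα
  have hv0 : v j * (1 - f) = 0 := by rw [mul_sub, mul_one, hvf, sub_self]
  have hf0 : f * (1 - f) = 0 := by rw [mul_sub, mul_one, hff, sub_self]
  have hβ0 : ∀ k, v j * β k = 0 := by
    intro k
    rw [hβ]
    calc v j * ((1 - f) * ζ * v k) = (v j * (1 - f)) * (ζ * v k) := by noncomm_ring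
      _ = 0 := by rw [hv0, zero_mul]
  have hfβ : ∀ k, f * β k = 0 := by
    intro k
    rw [hβ]
    calc f * ((1 - f) * ζ * v k) = (f * (1 - f)) * (ζ * v k) := by noncomm_ring
      _ = 0 := by rw [hf0, zero_mul]
  have hαα : α * α = 0 := by
    have h' : α * α = (1 - f) * ζ * (v j * β j) := by
      simp only [hα, hβ]; noncomm_ring
    rw [h', hβ0, mul_zero]
  have hfα : f * α = 0 := hfβ j
  have hαf : α * f = α := by
    rw [hα, hβ, mul_assoc, hvf]
  have hβI : ∀ k, β k ∈ I := fun k =>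
    I.mul_mem_right _ _ (I.mul_mem_left _ _ hζ)
  -- the diagonal part
  set G₀ : (Matrix (Fin n) (Fin n) R)ˣ :=
    transv j k₀ hjk α * transv k₀ j hjk.symm f * transv j k₀ hjk (-α) *
      transv k₀ j hjk.symm (-f) with hG₀
  have hG₀val : G₀.val = 1 + Matrix.single j j α := diag_unit j k₀ hjk α f hαf hfα hαα
  have hG₀mem : G₀ ∈ relElem n R I := by
    have h1 : transv j k₀ hjk α ∈ relElem n R I :=
      preElem_le_relElem (transv_mem_pre _ _ _ (hβI j))
    have h2 : transv k₀ j hjk.symm f * transv j k₀ hjk (-α) * transv k₀ j hjk.symm (-f)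
        ∈ relElem n R I := by
      refine Subgroup.subset_closure ⟨transv k₀ j hjk.symm (-f), transv_mem_elem _ _ _ _,
        transv j k₀ hjk (-α), transv_mem_pre _ _ _ (neg_mem (hβI j)), ?_⟩
      rw [transv_inv, neg_neg]
    have : G₀ = transv j k₀ hjk α *
        (transv k₀ j hjk.symm f * transv j k₀ hjk (-α) * transv k₀ j hjk.symm (-f)) := by
      rw [hG₀]; group
    rw [this]
    exact mul_mem h1 h2
  -- the off-diagonal part
  set γ : Fin n → R := fun k => (1 - α) * β k with hγ
  have hγI : ∀ k ∈ Finset.univ.erase j, γ k ∈ I := fun k _ => I.mul_mem_left _ _ (hβI k)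
  obtain ⟨P, hPval, -, hPpre⟩ := rowProd (I := I) j γ (Finset.univ.erase j)
    (fun hh => (Finset.mem_erase.mp hh).1 rfl)
  refine ⟨G₀ * P, mul_mem hG₀mem (preElem_le_relElem (hPpre hγI)), ?_⟩
  rw [Units.val_mul, hG₀val, hPval]
  have hsum : ∀ a b : Fin n, (∑ k ∈ Finset.univ.erase j, Matrix.single j k (γ k)) a b
      = if a = j ∧ b ≠ j then γ b else 0 := by
    intro a b
    rw [sum_std_apply]
    congr 1
    simp [Finset.mem_erase]
  have hprod : Matrix.single j j α * (∑ k ∈ Finset.univ.erase j, Matrix.single j k (γ k))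
      = ∑ k ∈ Finset.univ.erase j, Matrix.single j k (α * γ k) := by
    rw [Finset.mul_sum]
    exact Finset.sum_congr rfl fun k _ => Matrix.single_mul_single_same ..
  rw [mul_add, mul_one, add_mul, one_mul, hprod]
  ext a b
  simp only [Matrix.add_apply]
  rw [hsum]
  have hsum2 : (∑ k ∈ Finset.univ.erase j, Matrix.single j k (α * γ k)) a b
      = if a = j ∧ b ≠ j then α * γ b else 0 := by
    rw [sum_std_apply]
    congr 1
    simp [Finset.mem_erase]
  rw [hsum2]
  have hstd : (Matrix.single j j α : Matrix (Fin n) (Fin n) R) a b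
      = if a = j ∧ b = j then α else 0 := by
    simp [Matrix.single, and_comm, eq_comm]
  rw [hstd]
  rw [Matrix.vecMulVec_apply]
  by_cases ha : a = j
  · subst ha
    by_cases hb : b = a
    · subst hb
      simp only [if_pos rfl, ne_eq, not_true_eq_false, and_false, if_false, and_self, if_true]
      simp only [hα, hβ]
      abel
    · have hβb : γ b + α * γ b = β b := by
        show (1 - α) * β b + α * ((1 - α) * β b) = β b
        have h2 : (1 - α) * β b + α * ((1 - α) * β b) = β b - α * α * β b := by
          noncomm_ring
        rw [h2, hαα, zero_mul, sub_zero]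
      simp only [if_pos rfl, ne_eq, hb, not_false_eq_true, and_self, if_true, and_false,
        if_false]
      rw [hβb]
      simp only [hβ]
      abel
  · simp only [ha, false_and, if_false, zero_mul, and_false]
    abel

lemma vecMulVec_mul_vecMulVec (a v b v' : Fin n → R) (hvb : ∑ k, v k * b k = 0) :
    vecMulVec a v * vecMulVec b v' = 0 := by
  ext i l
  rw [Matrix.mul_apply]
  simp only [Matrix.vecMulVec_apply, Matrix.zero_apply]
  have h1 : ∀ k : Fin n, a i * v k * (b k * v' l) = a i * ((v k * b k) * v' l) := fun k => by
    noncomm_ring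
  rw [Finset.sum_congr rfl (fun k _ => h1 k), ← Finset.mul_sum, ← Finset.sum_mul, hvb,
    zero_mul, mul_zero]

lemma one_add_vecMulVec_mul (a b v : Fin n → R) (hvb : ∑ k, v k * b k = 0) :
    (1 + vecMulVec a v) * (1 + vecMulVec b v) = 1 + vecMulVec (a + b) v := by
  rw [mul_add, mul_one, add_mul, one_mul, vecMulVec_mul_vecMulVec a v b v hvb, add_zero]
  have : vecMulVec (a + b) v = vecMulVec a v + vecMulVec b v := by
    ext i l; simp [Matrix.vecMulVec_apply, add_mul]
  rw [this]
  abel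

lemma pieces_prod (v : Fin n → R) (q : Fin n → Fin n → R)
    (hq : ∀ j, ∑ k, v k * q j k = 0)
    (hG : ∀ j, ∃ G ∈ relElem n R I, G.val = 1 + vecMulVec (q j) v) :
    ∀ L : List (Fin n), ∃ G ∈ relElem n R I,
      G.val = 1 + vecMulVec (fun a => (L.map (fun j => q j a)).sum) v ∧
      (∑ k, v k * (L.map (fun j => q j k)).sum) = 0 := by
  intro L
  induction L with
  | nil =>
    refine ⟨1, one_mem _, ?_, by simp⟩
    have : (fun a : Fin n => (([] : List (Fin n)).map (fun j => q j a)).sum) = fun _ => (0:R) := by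
      funext a; simp
    rw [this, Units.val_one]
    have : vecMulVec (fun _ : Fin n => (0:R)) v = 0 := by
      ext i l; simp [Matrix.vecMulVec_apply]
    rw [this, add_zero]
  | cons j L' ih =>
    obtain ⟨G', hG'mem, hG'val, hS⟩ := ih
    obtain ⟨Gj, hGjmem, hGjval⟩ := hG j
    refine ⟨Gj * G', mul_mem hGjmem hG'mem, ?_, ?_⟩
    · rw [Units.val_mul, hGjval, hG'val, one_add_vecMulVec_mul _ _ _ hS]
      congr 1
    · have : ∀ k, v k * ((List.map (fun j' => q j' k) (j :: L')).sum)
          = v k * q j k + v k * (List.map (fun j' => q j' k) L').sum := by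
        intro k; simp [mul_add]
      rw [Finset.sum_congr rfl (fun k _ => this k), Finset.sum_add_distrib, hq j, hS, add_zero]

lemma mul_vecMulVec (M : Matrix (Fin n) (Fin n) R) (a b : Fin n → R) :
    M * vecMulVec a b = vecMulVec (M *ᵥ a) b := by
  ext i l
  rw [Matrix.mul_apply]
  simp only [Matrix.vecMulVec_apply, Matrix.mulVec, dotProduct]
  rw [Finset.sum_mul]
  exact Finset.sum_congr rfl fun k _ => by rw [mul_assoc]

lemma vecMulVec_mul (M : Matrix (Fin n) (Fin n) R) (a b : Fin n → R) :
    vecMulVec a b * M = vecMulVec a (b ᵥ* M) := by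
  ext i l
  rw [Matrix.mul_apply]
  simp only [Matrix.vecMulVec_apply, Matrix.vecMul, dotProduct]
  rw [Finset.mul_sum]
  exact Finset.sum_congr rfl fun k _ => by rw [mul_assoc]

lemma mulVec_smulright (M : Matrix (Fin n) (Fin n) R) (b : Fin n → R) (x : R) :
    M *ᵥ (fun k => b k * x) = fun i => (M *ᵥ b) i * x := by
  funext i
  simp only [Matrix.mulVec, dotProduct]
  rw [Finset.sum_mul]
  exact Finset.sum_congr rfl fun k _ => by rw [mul_assoc]

end Lemmas


theorem one_add_uxv_mem_relElem {n : ℕ} (R : Type*) [Ring R] (hR : IsExchangeRing R)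
    (hn : 2 ≤ n) (I : TwoSidedIdeal R) (x : R) (hx : x ∈ I) (u v : Fin n → R)
    (hunim : ∃ w : Fin n → R, ∑ k, v k * w k = 1) (huv : ∑ k, v k * u k = 0) :
    ∃ g ∈ relElem n R I,
      g.val = 1 + Matrix.vecMulVec (fun a => u a * x) v := by
  obtain ⟨w, hw⟩ := hunim
  obtain ⟨τ, hτe, h, w', hout, hmain, horth, hsum⟩ :=
    normalizeRow hR Finset.univ 1 (one_mul 1) v w (fun j _ => one_mul _) hw
  set v' : Fin n → R := vecMul v τ.val with hv'def
  set u' : Fin n → R := (τ⁻¹).val *ᵥ u with hu'def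
  set wh : Fin n → R := fun j => w' j * h j with hwhdef
  have hprop := fun j => hmain j (Finset.mem_univ j)
  have hvwh : ∀ j, v' j * wh j = h j := by
    intro j
    obtain ⟨h1, -, -, -, h5⟩ := hprop j
    show v' j * (w' j * h j) = h j
    rw [← mul_assoc, h5, h1]
  have hcross : ∀ i j, i ≠ j → wh i * v' j = 0 := by
    intro i j hij
    obtain ⟨-, -, -, h4j, -⟩ := hprop j
    show (w' i * h i) * v' j = 0
    rw [← h4j, mul_assoc (w' i) (h i), ← mul_assoc (h i) (h j),
      horth i (Finset.mem_univ i) j (Finset.mem_univ j) hij, zero_mul, mul_zero]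
  have hf : ∀ j, v' j * (wh j * v' j) = v' j := by
    intro j
    obtain ⟨-, -, -, h4, -⟩ := hprop j
    rw [← mul_assoc, hvwh j, h4]
  have hff : ∀ j, (wh j * v' j) * (wh j * v' j) = wh j * v' j := by
    intro j
    rw [mul_assoc, hf j]
  have huv' : ∑ k, v' k * u' k = 0 := by
    show v' ⬝ᵥ ((τ⁻¹).val *ᵥ u) = 0
    rw [dotProduct_mulVec]
    have hv : v' ᵥ* (τ⁻¹).val = v := by
      rw [hv'def, Matrix.vecMul_vecMul, Units.mul_inv, Matrix.vecMul_one]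
    rw [hv]
    exact huv
  have hfu : ∀ a, (wh a * v' a) * u' a = 0 := by
    intro a
    have h0 : ∑ k, wh a * (v' k * u' k) = 0 := by rw [← Finset.mul_sum, huv', mul_zero]
    rw [← Finset.add_sum_erase Finset.univ _ (Finset.mem_univ a)] at h0
    have h1 : ∑ k ∈ Finset.univ.erase a, wh a * (v' k * u' k) = 0 := by
      refine Finset.sum_eq_zero fun k hk => ?_
      have hka : k ≠ a := (Finset.mem_erase.mp hk).1
      rw [← mul_assoc, hcross a k hka.symm, zero_mul]
    rw [h1, add_zero] at h0
    rw [mul_assoc]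
    exact h0
  set q : Fin n → Fin n → R :=
    fun j a => if a = j then (1 - wh j * v' j) * (u' j * x) else 0 with hqdef
  have hq : ∀ j, ∑ k, v' k * q j k = 0 := by
    intro j
    have hterm : ∀ k, v' k * q j k
        = if k = j then v' k * ((1 - wh j * v' j) * (u' j * x)) else 0 := by
      intro k
      show v' k * (if k = j then (1 - wh j * v' j) * (u' j * x) else 0) = _
      rw [mul_ite, mul_zero]
    rw [Finset.sum_congr rfl (fun k _ => hterm k), Finset.sum_ite_eq' Finset.univ j
      (fun k => v' k * ((1 - wh j * v' j) * (u' j * x))), if_pos (Finset.mem_univ j),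
      ← mul_assoc, mul_sub, mul_one, hf j, sub_self, zero_mul]
  have hGj : ∀ j, ∃ G ∈ relElem n R I, G.val = 1 + vecMulVec (q j) v' := by
    intro j
    obtain ⟨G, hGmem, hGval⟩ := piece_mem hn j (I.mul_mem_left (u' j) x hx) v'
      (wh j * v' j) (hf j) (hff j)
    exact ⟨G, hGmem, by rw [hGval]⟩
  obtain ⟨G, hGmem, hGval, -⟩ := pieces_prod v' q hq hGj (List.finRange n)
  have hQ : (fun a => ((List.finRange n).map (fun j => q j a)).sum) = fun a => u' a * x := by
    funext a
    rw [← Fin.sum_univ_def (fun j => q j a)]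
    have hsum' : ∑ j, q j a = (1 - wh a * v' a) * (u' a * x) := by
      rw [Finset.sum_ite_eq Finset.univ a (fun j => (1 - wh j * v' j) * (u' j * x))]
      simp
    rw [hsum', sub_mul, one_mul, ← mul_assoc, hfu a, zero_mul, sub_zero]
  refine ⟨τ * G * τ⁻¹, relElem_conj hτe hGmem, ?_⟩
  rw [Units.val_mul, Units.val_mul, hGval, hQ]
  have hexp : τ.val * (1 + vecMulVec (fun a => u' a * x) v') * (τ⁻¹).val
      = τ.val * (τ⁻¹).val + τ.val * vecMulVec (fun a => u' a * x) v' * (τ⁻¹).val := by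
    noncomm_ring
  rw [hexp, Units.mul_inv, _root_.mul_vecMulVec, _root_.vecMulVec_mul, mulVec_smulright]
  have h1 : τ.val *ᵥ u' = u := by
    rw [hu'def, Matrix.mulVec_mulVec, Units.mul_inv, Matrix.one_mulVec]
  have h2 : v' ᵥ* (τ⁻¹).val = v := by
    rw [hv'def, Matrix.vecMul_vecMul, Units.mul_inv, Matrix.vecMul_one]
  rw [h1, h2]
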